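/- Let n ≥ 4 be a natural number and N = n*(n-1)/2. Let (ε, W) be a Weyl candidate in dimension n, with pair matrix M, characteristic coefficients c k, and half-sum chains G. Assume c N ≠ 0 (equivalently, det M ≠ 0). Suppose V : Fin n → ℝ and H : Fin n → Fin n → Fin n → ℝ satisfy ∑ d, W a b c d * V d = H a b c for all a, b, c. Then for every a, V a = (1 / (2*(n-1)*(c N))) * ∑_{k=0}^{N-2} (c k) * (∑_{i,j,b} H i j b * G (N-1-k) a b i j). In particular, V is uniquely determined by W and H. -/

import Mathlib

noncomputable section

open Finset

/-- A Weyl candidate in dimension `n`: diagonal metric signs `ε` and mixed components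
`W a b c d = C^{ab}{}_{cd}` satisfying antisymmetry in each pair, trace-freeness,
pair-interchange symmetry and the first Bianchi identity (with indices moved by `ε`). -/
def IsWeylCandidate {n : ℕ} (ε : Fin n → ℝ) (W : Fin n → Fin n → Fin n → Fin n → ℝ) : Prop :=
  (∀ i, ε i = 1 ∨ ε i = -1) ∧
  (∀ a b c d, W a b c d = -(W b a c d)) ∧
  (∀ a b c d, W a b c d = -(W a b d c)) ∧
  (∀ a c, ∑ i, W a i c i = 0) ∧
  (∀ a b c d, ε a * ε b * W a b c d = ε c * ε d * W c d a b) ∧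
  (∀ a b c d, ε b * W a b c d + ε c * W a c d b + ε d * W a d b c = 0)

/-- The pair matrix of `W`: the `N × N` matrix (`N = n(n-1)/2`) indexed by ordered pairs
`a < b`, with entries `W a b c d`. -/
def pairMatrix {n : ℕ} (W : Fin n → Fin n → Fin n → Fin n → ℝ) :
    Matrix {q : Fin n × Fin n // q.1 < q.2} {q : Fin n × Fin n // q.1 < q.2} ℝ :=
  fun p q => W p.1.1 p.1.2 q.1.1 q.1.2

/-- The characteristic coefficients of `W`: `c k` is the coefficient of `X^(N-k)` in the
characteristic polynomial of the pair matrix, `N = n(n-1)/2`. -/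
def charCoeff {n : ℕ} (W : Fin n → Fin n → Fin n → Fin n → ℝ) (k : ℕ) : ℝ :=
  ((pairMatrix W).charpoly).coeff (n * (n - 1) / 2 - k)

/-- The half-sum chains of `W`: `halfChain W 1 = W` and
`halfChain W (p+1) a b c d = (1/2) ∑_{i,j} halfChain W p a b i j * W i j c d`. -/
def halfChain {n : ℕ} (W : Fin n → Fin n → Fin n → Fin n → ℝ) :
    ℕ → Fin n → Fin n → Fin n → Fin n → ℝ
  | 0 => fun _ _ _ _ => 0
  | 1 => W
  | (p + 2) => fun a b c d => (1 / 2) * ∑ i, ∑ j, halfChain W (p + 1) a b i j * W i j c d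

lemma hc_right {n : ℕ} (W : Fin n → Fin n → Fin n → Fin n → ℝ)
    (h : ∀ a b c d, W a b c d = -(W a b d c)) :
    ∀ m a b c d, halfChain W m a b c d = -(halfChain W m a b d c) := by
  intro m
  match m with
  | 0 => intro a b c d; simp [halfChain]
  | 1 => exact h
  | (p+2) =>
    intro a b c d
    have e : ∀ i j : Fin n, halfChain W (p+1) a b i j * W i j c d
        = -(halfChain W (p+1) a b i j * W i j d c) := by
      intro i j; rw [h i j c d]; ring
    simp only [halfChain, e, Finset.sum_neg_distrib, mul_neg]

lemma hc_left {n : ℕ} (W : Fin n → Fin n → Fin n → Fin n → ℝ)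
    (h : ∀ a b c d, W a b c d = -(W b a c d)) :
    ∀ m a b c d, halfChain W m a b c d = -(halfChain W m b a c d) := by
  intro m
  induction m with
  | zero => intro a b c d; simp [halfChain]
  | succ p ih =>
    match p with
    | 0 => exact h
    | (q+1) =>
      intro a b c d
      have e : ∀ i j : Fin n, halfChain W (q+1) a b i j * W i j c d
          = -(halfChain W (q+1) b a i j * W i j c d) := by
        intro i j; rw [ih a b i j]; ring
      simp only [halfChain, e, Finset.sum_neg_distrib, mul_neg]

-- sum of a symmetric function with zero diagonal equals twice the sum over ordered pairs
lemma sym_sum {n : ℕ} (f : Fin n → Fin n → ℝ) (hf : ∀ i j, f i j = f j i)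
    (hd : ∀ i, f i i = 0) :
    ∑ i, ∑ j, f i j = 2 * ∑ r : {q : Fin n × Fin n // q.1 < q.2}, f r.1.1 r.1.2 := by
  have hsub : ∑ r : {q : Fin n × Fin n // q.1 < q.2}, f r.1.1 r.1.2
      = ∑ p ∈ univ.filter (fun p : Fin n × Fin n => p.1 < p.2), f p.1 p.2 := by
    rw [Finset.sum_subtype (p := fun p : Fin n × Fin n => p.1 < p.2)
      (univ.filter (fun p : Fin n × Fin n => p.1 < p.2)) (by simp) (fun p => f p.1 p.2)]
  have h1 : ∑ i, ∑ j, f i j = ∑ p : Fin n × Fin n, f p.1 p.2 := by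
    rw [← Finset.sum_product']; rfl
  have h2 : ∑ p ∈ univ.filter (fun p : Fin n × Fin n => p.2 < p.1), f p.1 p.2
      = ∑ p ∈ univ.filter (fun p : Fin n × Fin n => p.1 < p.2), f p.1 p.2 := by
    apply Finset.sum_nbij' (fun p => Prod.swap p) (fun p => Prod.swap p) <;>
      simp [hf _ _]
  have h3 : ∑ p : Fin n × Fin n, f p.1 p.2
      = ∑ p ∈ univ.filter (fun p : Fin n × Fin n => p.1 < p.2), f p.1 p.2
      + ∑ p ∈ univ.filter (fun p : Fin n × Fin n => ¬ p.1 < p.2), f p.1 p.2 :=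
    (Finset.sum_filter_add_sum_filter_not _ _ _).symm
  have h4 : ∑ p ∈ univ.filter (fun p : Fin n × Fin n => ¬ p.1 < p.2), f p.1 p.2
      = ∑ p ∈ univ.filter (fun p : Fin n × Fin n => p.2 < p.1), f p.1 p.2 := by
    rw [← Finset.sum_filter_add_sum_filter_not
      (univ.filter (fun p : Fin n × Fin n => ¬ p.1 < p.2)) (fun p => p.2 < p.1)]
    have e1 : (univ.filter (fun p : Fin n × Fin n => ¬ p.1 < p.2)).filter
        (fun p => p.2 < p.1) = univ.filter (fun p : Fin n × Fin n => p.2 < p.1) := by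
      ext p; simp; intro h; exact le_of_lt h
    have e2 : ∑ p ∈ (univ.filter (fun p : Fin n × Fin n => ¬ p.1 < p.2)).filter
        (fun p => ¬ p.2 < p.1), f p.1 p.2 = 0 := by
      apply Finset.sum_eq_zero
      intro p hp
      simp only [Finset.mem_filter] at hp
      have : p.1 = p.2 := le_antisymm (not_lt.mp hp.2) (not_lt.mp hp.1.2)
      rw [show f p.1 p.2 = f p.1 p.1 from by rw [this], hd]
    rw [e1, e2, add_zero]
  rw [h1, h3, h4, h2, hsub]; ring
def pairEquiv (n : ℕ) : {q : Fin n × Fin n // q.1 < q.2} ≃ Σ j : Fin n, Fin j.val where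
  toFun q := ⟨q.1.2, ⟨q.1.1.val, q.2⟩⟩
  invFun x := ⟨(⟨x.2.val, lt_trans x.2.isLt x.1.isLt⟩, x.1), x.2.isLt⟩
  left_inv q := by ext <;> rfl
  right_inv x := by ext <;> rfl

lemma card_pairs (n : ℕ) :
    Fintype.card {q : Fin n × Fin n // q.1 < q.2} = n * (n - 1) / 2 := by
  rw [Fintype.card_congr (pairEquiv n), Fintype.card_sigma]
  simp only [Fintype.card_fin]
  rw [Fin.sum_univ_eq_sum_range (fun i => i), Finset.sum_range_id]

lemma hc_pow_apply {n : ℕ} (W : Fin n → Fin n → Fin n → Fin n → ℝ)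
    (hl : ∀ a b c d, W a b c d = -(W b a c d))
    (hr : ∀ a b c d, W a b c d = -(W a b d c)) :
    ∀ m (p q : {q : Fin n × Fin n // q.1 < q.2}),
      ((pairMatrix W) ^ (m+1)) p q = halfChain W (m+1) p.1.1 p.1.2 q.1.1 q.1.2 := by
  intro m
  induction m with
  | zero => intro p q; rw [pow_one]; rfl
  | succ m ih =>
    intro p q
    rw [pow_succ, Matrix.mul_apply]
    have key := sym_sum (fun i j => halfChain W (m+1) p.1.1 p.1.2 i j * W i j q.1.1 q.1.2)
      (fun i j => by
        rw [hc_right W hr (m+1) _ _ i j, hl i j]; ring)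
      (fun i => by
        have := hl i i q.1.1 q.1.2
        have hz : W i i q.1.1 q.1.2 = 0 := by linarith
        rw [hz, mul_zero])
    have goal2 : ∑ r : {q : Fin n × Fin n // q.1 < q.2},
        (pairMatrix W ^ (m+1)) p r * pairMatrix W r q
        = ∑ r : {q : Fin n × Fin n // q.1 < q.2},
          halfChain W (m+1) p.1.1 p.1.2 r.1.1 r.1.2 * W r.1.1 r.1.2 q.1.1 q.1.2 :=
      Finset.sum_congr rfl fun r _ => by rw [ih p r]; rfl
    show _ = halfChain W (m+2) p.1.1 p.1.2 q.1.1 q.1.2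
    rw [halfChain]
    dsimp only
    rw [goal2, key]
    ring

lemma ch_sum {n N : ℕ} (hN : N = n * (n - 1) / 2) (W : Fin n → Fin n → Fin n → Fin n → ℝ)
    (p q : {q : Fin n × Fin n // q.1 < q.2}) :
    ∑ k ∈ Finset.range (N+1), charCoeff W k * ((pairMatrix W)^(N-k)) p q = 0 := by
  have hdeg : (pairMatrix W).charpoly.natDegree = N := by
    rw [Matrix.charpoly_natDegree_eq_dim, card_pairs, hN]
  have h0 := Matrix.aeval_self_charpoly (pairMatrix W)
  rw [Polynomial.aeval_eq_sum_range, hdeg] at h0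
  have h1 : ∑ k ∈ Finset.range (N+1),
      ((pairMatrix W).charpoly.coeff (N - k)) • (pairMatrix W)^(N-k) = 0 := by
    have := Finset.sum_range_reflect
      (fun i => ((pairMatrix W).charpoly.coeff i) • (pairMatrix W)^i) (N+1)
    simp only [Nat.add_sub_cancel] at this
    rw [this, h0]
  have h2 := congrArg (fun A : Matrix {q : Fin n × Fin n // q.1 < q.2}
      {q : Fin n × Fin n // q.1 < q.2} ℝ => A p q) h1
  simp only [Matrix.sum_apply, Matrix.smul_apply, smul_eq_mul, Matrix.zero_apply] at h2
  rw [← h2]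
  refine Finset.sum_congr rfl fun k _ => ?_
  unfold charCoeff
  rw [hN]

lemma key_all {n N : ℕ} (hN : N = n * (n - 1) / 2)
    (W : Fin n → Fin n → Fin n → Fin n → ℝ)
    (hl : ∀ a b c d, W a b c d = -(W b a c d))
    (hr : ∀ a b c d, W a b c d = -(W a b d c)) :
    ∀ a b c d : Fin n, ∑ k ∈ Finset.range N, charCoeff W k * halfChain W (N-k) a b c d
      = -(charCoeff W N * ((if a = c then (1:ℝ) else 0) * (if b = d then 1 else 0)
          - (if a = d then (1:ℝ) else 0) * (if b = c then 1 else 0))) := by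
  have Lflip1 : ∀ a b c d : Fin n,
      ∑ k ∈ Finset.range N, charCoeff W k * halfChain W (N-k) b a c d
      = -(∑ k ∈ Finset.range N, charCoeff W k * halfChain W (N-k) a b c d) := by
    intro a b c d
    rw [← Finset.sum_neg_distrib]
    exact Finset.sum_congr rfl fun k _ => by rw [hc_left W hl (N-k) a b c d]; ring
  have Lflip2 : ∀ a b c d : Fin n,
      ∑ k ∈ Finset.range N, charCoeff W k * halfChain W (N-k) a b d c
      = -(∑ k ∈ Finset.range N, charCoeff W k * halfChain W (N-k) a b c d) := by
    intro a b c d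
    rw [← Finset.sum_neg_distrib]
    exact Finset.sum_congr rfl fun k _ => by rw [hc_right W hr (N-k) a b c d]; ring
  -- base case : a < b, c < d
  have base : ∀ (a b c d : Fin n) (hab : a < b) (hcd : c < d),
      ∑ k ∈ Finset.range N, charCoeff W k * halfChain W (N-k) a b c d
      = -(charCoeff W N * ((if a = c then (1:ℝ) else 0) * (if b = d then 1 else 0)
          - (if a = d then (1:ℝ) else 0) * (if b = c then 1 else 0))) := by
    intro a b c d hab hcd
    set p : {q : Fin n × Fin n // q.1 < q.2} := ⟨(a, b), hab⟩ with hp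
    set q : {q : Fin n × Fin n // q.1 < q.2} := ⟨(c, d), hcd⟩ with hq
    have hch := ch_sum hN W p q
    rw [Finset.sum_range_succ] at hch
    have hne : ¬(a = d ∧ b = c) := by
      rintro ⟨rfl, rfl⟩
      exact lt_irrefl a (hab.trans hcd)
    have e1 : (if a = d then (1:ℝ) else 0) * (if b = c then 1 else 0) = 0 := by
      by_cases h3 : a = d
      · have h4 : b ≠ c := fun h => hne ⟨h3, h⟩
        simp [h3, h4]
      · simp [h3]
    have hpq : p = q ↔ a = c ∧ b = d := by
      simp [hp, hq, Subtype.ext_iff, Prod.ext_iff]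
    have e0 : ((pairMatrix W) ^ (N - N)) p q
        = (if a = c then (1:ℝ) else 0) * (if b = d then 1 else 0)
          - (if a = d then (1:ℝ) else 0) * (if b = c then 1 else 0) := by
      rw [Nat.sub_self, pow_zero, Matrix.one_apply, e1, sub_zero]
      by_cases h1 : a = c <;> by_cases h2 : b = d <;> simp [hpq, h1, h2]
    rw [e0] at hch
    have hterm : ∀ k ∈ Finset.range N,
        charCoeff W k * ((pairMatrix W) ^ (N - k)) p q
        = charCoeff W k * halfChain W (N-k) a b c d := by
      intro k hk
      rw [Finset.mem_range] at hk
      have hk1 : N - k = (N - k - 1) + 1 := by omega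
      rw [hk1, hc_pow_apply W hl hr (N - k - 1) p q]
    rw [Finset.sum_congr rfl hterm] at hch
    linarith [hch]
  have diag1 : ∀ a c d : Fin n,
      ∑ k ∈ Finset.range N, charCoeff W k * halfChain W (N-k) a a c d
      = -(charCoeff W N * ((if a = c then (1:ℝ) else 0) * (if a = d then 1 else 0)
          - (if a = d then (1:ℝ) else 0) * (if a = c then 1 else 0))) := by
    intro a c d
    have hz : ∀ m, halfChain W m a a c d = 0 := fun m => by
      have := hc_left W hl m a a c d; linarith
    simp only [hz, mul_zero, Finset.sum_const_zero]
    ring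
  have diag2 : ∀ a b c : Fin n,
      ∑ k ∈ Finset.range N, charCoeff W k * halfChain W (N-k) a b c c
      = -(charCoeff W N * ((if a = c then (1:ℝ) else 0) * (if b = c then 1 else 0)
          - (if a = c then (1:ℝ) else 0) * (if b = c then 1 else 0))) := by
    intro a b c
    have hz : ∀ m, halfChain W m a b c c = 0 := fun m => by
      have := hc_right W hr m a b c c; linarith
    simp only [hz, mul_zero, Finset.sum_const_zero]
    ring
  -- handle c, d for fixed a < b
  have good : ∀ (a b c d : Fin n), a < b →
      ∑ k ∈ Finset.range N, charCoeff W k * halfChain W (N-k) a b c d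
      = -(charCoeff W N * ((if a = c then (1:ℝ) else 0) * (if b = d then 1 else 0)
          - (if a = d then (1:ℝ) else 0) * (if b = c then 1 else 0))) := by
    intro a b c d hab
    rcases lt_trichotomy c d with hcd | hcd | hcd
    · exact base a b c d hab hcd
    · subst hcd; exact diag2 a b c
    · have h := base a b d c hab hcd
      have := Lflip2 a b d c
      rw [h] at this
      rw [show ∑ k ∈ Finset.range N, charCoeff W k * halfChain W (N-k) a b c d
        = -(∑ k ∈ Finset.range N, charCoeff W k * halfChain W (N-k) a b d c) from
        (Lflip2 a b d c).symm ▸ rfl, h]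
      ring
  intro a b c d
  rcases lt_trichotomy a b with hab | hab | hab
  · exact good a b c d hab
  · subst hab; exact diag1 a c d
  · have h := good b a c d hab
    have hf := Lflip1 b a c d
    rw [h] at hf
    rw [hf]
    ring

lemma trace_zero {n : ℕ} (ε : Fin n → ℝ) (W : Fin n → Fin n → Fin n → Fin n → ℝ)
    (hs : ∀ i, ε i = 1 ∨ ε i = -1)
    (hl : ∀ a b c d, W a b c d = -(W b a c d))
    (h4 : ∀ a c, ∑ i, W a i c i = 0)
    (h5 : ∀ a b c d, ε a * ε b * W a b c d = ε c * ε d * W c d a b) :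
    ∀ a d, ∑ b, W a b b d = 0 := by
  have e2 : ∀ i, ε i * ε i = 1 := fun i => by rcases hs i with h | h <;> rw [h] <;> norm_num
  intro a d
  have w : ∀ b, W a b b d = ε a * (ε d * W b d a b) := by
    intro b
    have h6 : (ε a * ε a) * ((ε b * ε b) * W a b b d)
        = ε a * ((ε b * ε b) * (ε d * W b d a b)) := by
      linear_combination (ε a * ε b) * (h5 a b b d)
    rw [e2 a, e2 b] at h6
    simpa using h6
  rw [Finset.sum_congr rfl fun b _ => w b]
  rw [← Finset.mul_sum, ← Finset.mul_sum]
  have hz : ∑ b, W b d a b = 0 := by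
    rw [Finset.sum_congr rfl fun b _ => hl b d a b, Finset.sum_neg_distrib, h4 d a, neg_zero]
  rw [hz, mul_zero, mul_zero]

lemma step_contract {n : ℕ} (W : Fin n → Fin n → Fin n → Fin n → ℝ)
    (V : Fin n → ℝ) (H : Fin n → Fin n → Fin n → ℝ)
    (hVH : ∀ a b c, ∑ d, W a b c d * V d = H a b c) :
    ∀ p a b c, ∑ d, halfChain W (p+2) a b c d * V d
      = (1/2) * ∑ i, ∑ j, halfChain W (p+1) a b i j * H i j c := by
  intro p a b c
  have e2 : ∑ d, (∑ i, ∑ j, halfChain W (p+1) a b i j * W i j c d) * V d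
      = ∑ i, ∑ j, halfChain W (p+1) a b i j * H i j c := by
    simp only [Finset.sum_mul]
    rw [Finset.sum_comm]
    refine Finset.sum_congr rfl fun i _ => ?_
    rw [Finset.sum_comm]
    refine Finset.sum_congr rfl fun j _ => ?_
    rw [← hVH i j c, Finset.mul_sum]
    exact Finset.sum_congr rfl fun d _ => by ring
  simp only [halfChain]
  calc ∑ d, (1/2 * (∑ i, ∑ j, halfChain W (p+1) a b i j * W i j c d)) * V d
      = 1/2 * ∑ d, (∑ i, ∑ j, halfChain W (p+1) a b i j * W i j c d) * V d := by
        rw [Finset.mul_sum]; exact Finset.sum_congr rfl fun d _ => by ring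
    _ = _ := by rw [e2]

/-- The Lemma of the paper: if `c_N ≠ 0`, the inhomogeneous algebraic equation
`C^{ab}{}_{cd} V^d = H^{ab}{}_c` has the unique solution given by the Cayley–Hamilton
expansion; in particular `V` is uniquely determined by `W` and `H`. -/
theorem lemma_unique_solution {n : ℕ} (hn : 4 ≤ n) (N : ℕ) (hN : N = n * (n - 1) / 2)
    (ε : Fin n → ℝ) (W : Fin n → Fin n → Fin n → Fin n → ℝ)
    (hW : IsWeylCandidate ε W)
    (hcN : charCoeff W N ≠ 0)
    (V : Fin n → ℝ) (H : Fin n → Fin n → Fin n → ℝ)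
    (hVH : ∀ a b c, ∑ d, W a b c d * V d = H a b c) :
    ∀ a, V a = (1 / (2 * ((n : ℝ) - 1) * charCoeff W N)) *
      ∑ k ∈ Finset.range (N - 1), charCoeff W k *
        (∑ i, ∑ j, ∑ b, H i j b * halfChain W (N - 1 - k) a b i j) := by
  intro a
  obtain ⟨hs, hl, hr, h4, h5, _⟩ := hW
  have h12 : 12 ≤ n * (n - 1) := le_trans (by norm_num) (Nat.mul_le_mul hn (by omega : 3 ≤ n - 1))
  have h2N : 2 ≤ N := by rw [hN]; omega
  obtain ⟨N', hN'⟩ : ∃ N', N = N' + 2 := ⟨N - 2, by omega⟩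
  subst hN'
  set cC := charCoeff W with hcC
  -- the contracted Cayley–Hamilton identity
  have T : ∑ b, ∑ d, (∑ k ∈ Finset.range (N'+2), cC k * halfChain W (N'+2-k) a b b d) * V d
      = ∑ b, ∑ d, (-(cC (N'+2) * ((if a = b then (1:ℝ) else 0) * (if b = d then 1 else 0)
          - (if a = d then (1:ℝ) else 0) * (if b = b then 1 else 0)))) * V d := by
    refine Finset.sum_congr rfl fun b _ => Finset.sum_congr rfl fun d _ => ?_
    rw [key_all hN W hl hr a b b d]
  -- right-hand side evaluates to cC N (n-1) V a
  have RHSval : ∑ b, ∑ d, (-(cC (N'+2) * ((if a = b then (1:ℝ) else 0) * (if b = d then 1 else 0)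
      - (if a = d then (1:ℝ) else 0) * (if b = b then 1 else 0)))) * V d
      = cC (N'+2) * ((n:ℝ) - 1) * V a := by
    have inner : ∀ b : Fin n, ∑ d, (-(cC (N'+2) * ((if a = b then (1:ℝ) else 0)
        * (if b = d then 1 else 0)
        - (if a = d then (1:ℝ) else 0) * (if b = b then 1 else 0)))) * V d
        = -(cC (N'+2) * ((if a = b then (1:ℝ) else 0) * V b - V a)) := by
      intro b
      have e1 : ∑ d, (if b = d then (1:ℝ) else 0) * V d = V b := by
        simp [ite_mul]
      have e2 : ∑ d, (if a = d then (1:ℝ) else 0) * V d = V a := by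
        simp [ite_mul]
      calc ∑ d, (-(cC (N'+2) * ((if a = b then (1:ℝ) else 0) * (if b = d then 1 else 0)
            - (if a = d then (1:ℝ) else 0) * (if b = b then 1 else 0)))) * V d
          = ∑ d, ((-(cC (N'+2)) * (if a = b then (1:ℝ) else 0)) * ((if b = d then (1:ℝ) else 0) * V d)
            + cC (N'+2) * ((if a = d then (1:ℝ) else 0) * V d)) := by
            refine Finset.sum_congr rfl fun d _ => ?_
            rw [if_pos rfl]; ring
        _ = (-(cC (N'+2)) * (if a = b then (1:ℝ) else 0)) * V b + cC (N'+2) * V a := by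
            rw [Finset.sum_add_distrib, ← Finset.mul_sum, ← Finset.mul_sum, e1, e2]
        _ = -(cC (N'+2) * ((if a = b then (1:ℝ) else 0) * V b - V a)) := by ring
    rw [Finset.sum_congr rfl fun b _ => inner b]
    have e3 : ∑ b, (if a = b then (1:ℝ) else 0) * V b = V a := by simp [ite_mul]
    have e4 : ∑ b : Fin n, (cC (N'+2) * V a) = (n:ℝ) * (cC (N'+2) * V a) := by
      rw [Finset.sum_const, Finset.card_univ, Fintype.card_fin, nsmul_eq_mul]
    calc ∑ b, -(cC (N'+2) * ((if a = b then (1:ℝ) else 0) * V b - V a))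
        = ∑ b, ((-(cC (N'+2))) * ((if a = b then (1:ℝ) else 0) * V b) + cC (N'+2) * V a) := by
          refine Finset.sum_congr rfl fun b _ => by ring
      _ = (-(cC (N'+2))) * V a + (n:ℝ) * (cC (N'+2) * V a) := by
          rw [Finset.sum_add_distrib, ← Finset.mul_sum, e3, e4]
      _ = cC (N'+2) * ((n:ℝ) - 1) * V a := by ring
  -- left-hand side: exchange sums
  have LHSval : ∑ b, ∑ d, (∑ k ∈ Finset.range (N'+2), cC k * halfChain W (N'+2-k) a b b d) * V d
      = ∑ k ∈ Finset.range (N'+2), cC k * (∑ b, ∑ d, halfChain W (N'+2-k) a b b d * V d) := by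
    simp only [Finset.sum_mul]
    have st1 : ∀ b : Fin n, ∑ d, ∑ k ∈ Finset.range (N'+2),
        cC k * halfChain W (N'+2-k) a b b d * V d
        = ∑ k ∈ Finset.range (N'+2), ∑ d, cC k * halfChain W (N'+2-k) a b b d * V d :=
      fun b => Finset.sum_comm
    rw [Finset.sum_congr rfl fun b _ => st1 b, Finset.sum_comm]
    refine Finset.sum_congr rfl fun k _ => ?_
    rw [Finset.mul_sum]
    refine Finset.sum_congr rfl fun b _ => ?_
    rw [Finset.mul_sum]
    refine Finset.sum_congr rfl fun d _ => by ring
  have E1 : cC (N'+2) * ((n:ℝ) - 1) * V a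
      = ∑ k ∈ Finset.range (N'+2),
          cC k * (∑ b, ∑ d, halfChain W (N'+2-k) a b b d * V d) := by
    rw [← RHSval, ← T, LHSval]
  rw [Finset.sum_range_succ] at E1
  have Szero : ∑ b, ∑ d, halfChain W (N'+2-(N'+1)) a b b d * V d = 0 := by
    have hidx : N'+2-(N'+1) = 1 := by omega
    rw [hidx]
    simp only [halfChain]
    rw [Finset.sum_comm]
    refine Finset.sum_eq_zero fun d _ => ?_
    rw [← Finset.sum_mul, trace_zero ε W hs hl h4 h5 a d, zero_mul]
  rw [Szero, mul_zero, add_zero] at E1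
  have hterm : ∀ k ∈ Finset.range (N'+1),
      cC k * (∑ b, ∑ d, halfChain W (N'+2-k) a b b d * V d)
      = cC k * ((1/2) * ∑ i, ∑ j, ∑ b, H i j b * halfChain W (N'+1-k) a b i j) := by
    intro k hk
    rw [Finset.mem_range] at hk
    have hidx : N'+2-k = (N'-k)+2 := by omega
    have hidx2 : N'+1-k = (N'-k)+1 := by omega
    rw [hidx, hidx2]
    congr 1
    have hb : ∀ b, ∑ d, halfChain W ((N'-k)+2) a b b d * V d
        = (1/2) * ∑ i, ∑ j, halfChain W ((N'-k)+1) a b i j * H i j b :=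
      fun b => step_contract W V H hVH (N'-k) a b b
    rw [Finset.sum_congr rfl fun b _ => hb b, ← Finset.mul_sum]
    congr 1
    rw [Finset.sum_comm]
    refine Finset.sum_congr rfl fun i _ => ?_
    rw [Finset.sum_comm]
    refine Finset.sum_congr rfl fun j _ => ?_
    exact Finset.sum_congr rfl fun b _ => mul_comm _ _
  rw [Finset.sum_congr rfl hterm] at E1
  have hSig : ∑ k ∈ Finset.range (N'+1),
      cC k * ((1/2) * ∑ i, ∑ j, ∑ b, H i j b * halfChain W (N'+1-k) a b i j)
      = (1/2) * ∑ k ∈ Finset.range (N'+1),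
          cC k * (∑ i, ∑ j, ∑ b, H i j b * halfChain W (N'+1-k) a b i j) := by
    rw [Finset.mul_sum]
    exact Finset.sum_congr rfl fun k _ => by ring
  rw [hSig] at E1
  have hg1 : N' + 2 - 1 = N' + 1 := by omega
  rw [hg1]
  have hn1 : ((n:ℝ) - 1) ≠ 0 := by
    have h4n : (4:ℝ) ≤ (n:ℝ) := by exact_mod_cast hn
    intro h; linarith
  have hC : (2 * ((n:ℝ) - 1) * cC (N'+2)) ≠ 0 :=
    mul_ne_zero (mul_ne_zero two_ne_zero hn1) hcN
  rw [eq_comm, one_div, inv_mul_eq_div, div_eq_iff hC, eq_comm]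
  linear_combination 2 * E1
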